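/- The center of the generalized Weyl algebra 𝒜 = K[h][X, Y; σ^m, a], with σ(h)=h-1 and a = (h+m-1)(h-2)⋯(h-m), equals K. -/

import Mathlib

open Polynomial


open Polynomial

/-- The defining element `a = (h+m-1)(h-2)(h-3)⋯(h-m)`. -/
noncomputable def aPoly (K : Type*) [Field K] (m : ℕ) : Polynomial K :=
  (X + C ((m : K) - 1)) * ∏ j ∈ Finset.Icc 2 m, (X - C (j : K))

/-- Defining relations of the generalized Weyl algebra
`𝒜 = K[h][X,Y;σ^m,a]`, `σ(h) = h-1`, `a = (h+m-1)(h-2)⋯(h-m)`: generators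
`h` (index 0), `X` (index 1), `Y` (index 2) with `Xh = (h-m)X`, `Yh = (h+m)Y`,
`YX = a`, `XY = σ^m(a) = a(h-m)`. -/
inductive gwaRel2 (K : Type*) [Field K] (m : ℕ) :
    FreeAlgebra K (Fin 3) → FreeAlgebra K (Fin 3) → Prop
  | xh : gwaRel2 K m (FreeAlgebra.ι K 1 * FreeAlgebra.ι K 0)
      ((FreeAlgebra.ι K 0 - algebraMap K _ (m : K)) * FreeAlgebra.ι K 1)
  | yh : gwaRel2 K m (FreeAlgebra.ι K 2 * FreeAlgebra.ι K 0)
      ((FreeAlgebra.ι K 0 + algebraMap K _ (m : K)) * FreeAlgebra.ι K 2)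
  | yx : gwaRel2 K m (FreeAlgebra.ι K 2 * FreeAlgebra.ι K 1)
      (aeval (FreeAlgebra.ι K 0) (aPoly K m))
  | xy : gwaRel2 K m (FreeAlgebra.ι K 1 * FreeAlgebra.ι K 2)
      (aeval (FreeAlgebra.ι K 0) ((aPoly K m).comp (X - C (m : K))))

/-- The generalized Weyl algebra `𝒜 = K[h][X,Y;σ^m, (h+m-1)(h-2)⋯(h-m)]`. -/
abbrev GWA2 (K : Type*) [Field K] (m : ℕ) := RingQuot (gwaRel2 K m)

noncomputable section

namespace GwaAux

variable (K : Type*) [Field K] (m : ℕ)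

/-- the shift polynomial `t + n m` -/
def th (n : ℤ) : Polynomial K := X + C ((n : K) * (m : K))

def Hop : Module.End K (ℤ → Polynomial K) where
  toFun f n := th K m n * f n
  map_add' f g := funext fun n => by simp [mul_add]
  map_smul' c f := funext fun n => by simp [mul_smul_comm]

def Xop (_m : ℕ) : Module.End K (ℤ → Polynomial K) where
  toFun f n := f (n - 1)
  map_add' f g := rfl
  map_smul' c f := rfl

def Yop : Module.End K (ℤ → Polynomial K) where
  toFun f n := (aPoly K m).comp (th K m n) * f (n + 1)
  map_add' f g := funext fun n => by simp [mul_add]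
  map_smul' c f := funext fun n => by simp [mul_smul_comm]

@[simp] lemma Hop_apply (f : ℤ → Polynomial K) (n : ℤ) : Hop K m f n = th K m n * f n := rfl
@[simp] lemma Xop_apply (f : ℤ → Polynomial K) (n : ℤ) : Xop K m f n = f (n - 1) := rfl
@[simp] lemma Yop_apply (f : ℤ → Polynomial K) (n : ℤ) :
    Yop K m f n = (aPoly K m).comp (th K m n) * f (n + 1) := rfl

lemma th_sub (n : ℤ) : th K m (n - 1) = th K m n - C (m : K) := by
  have : ((n - 1 : ℤ) : K) * m = (n : K) * m - m := by push_cast; ring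
  simp only [th, this, C_sub]
  ring

lemma th_add (n : ℤ) : th K m (n + 1) = th K m n + C (m : K) := by
  have : ((n + 1 : ℤ) : K) * m = (n : K) * m + m := by push_cast; ring
  simp only [th, this, C_add]
  ring

lemma Hop_pow_apply (k : ℕ) (f : ℤ → Polynomial K) (n : ℤ) :
    (Hop K m ^ k) f n = th K m n ^ k * f n := by
  induction k generalizing f with
  | zero => simp
  | succ k ih =>
    rw [pow_succ', Module.End.mul_apply, Hop_apply, ih, pow_succ']
    ring

lemma aeval_Hop_apply (p : Polynomial K) (f : ℤ → Polynomial K) (n : ℤ) :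
    (aeval (Hop K m) p) f n = p.comp (th K m n) * f n := by
  induction p using Polynomial.induction_on' with
  | add p q hp hq =>
    simp only [map_add, LinearMap.add_apply, Pi.add_apply, hp, hq, add_comp, add_mul]
  | monomial k c =>
    rw [aeval_monomial, Module.End.mul_apply, Module.algebraMap_end_apply, Pi.smul_apply,
      Hop_pow_apply, ← C_mul_X_pow_eq_monomial, mul_comp, C_comp, X_pow_comp,
      smul_eq_C_mul]
    ring

lemma relXH : Xop K m * Hop K m = (Hop K m - algebraMap K _ ((m : K))) * Xop K m := by
  apply LinearMap.ext; intro f; funext n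
  simp only [Module.End.mul_apply, LinearMap.sub_apply, Module.algebraMap_end_apply,
    Hop_apply, Xop_apply, Pi.sub_apply, Pi.smul_apply, smul_eq_C_mul, th_sub]
  ring

lemma relYH : Yop K m * Hop K m = (Hop K m + algebraMap K _ ((m : K))) * Yop K m := by
  apply LinearMap.ext; intro f; funext n
  simp only [Module.End.mul_apply, LinearMap.add_apply, Module.algebraMap_end_apply,
    Hop_apply, Yop_apply, Pi.add_apply, Pi.smul_apply, smul_eq_C_mul]
  rw [th_add]
  ring

lemma relYX : Yop K m * Xop K m = aeval (Hop K m) (aPoly K m) := by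
  apply LinearMap.ext; intro f; funext n
  rw [Module.End.mul_apply, aeval_Hop_apply]
  simp

lemma relXY : Xop K m * Yop K m = aeval (Hop K m) ((aPoly K m).comp (X - C (m : K))) := by
  apply LinearMap.ext; intro f; funext n
  rw [Module.End.mul_apply, aeval_Hop_apply, comp_assoc]
  simp only [Xop_apply, Yop_apply, sub_add_cancel]
  congr 2
  rw [sub_comp, X_comp, C_comp, th_sub]

def gens : Fin 3 → Module.End K (ℤ → Polynomial K) := ![Hop K m, Xop K m, Yop K m]

lemma rel_sound : ∀ ⦃a b : FreeAlgebra K (Fin 3)⦄, gwaRel2 K m a b →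
    FreeAlgebra.lift K (gens K m) a = FreeAlgebra.lift K (gens K m) b := by
  intro a b hab
  induction hab with
  | xh =>
    simp only [map_mul, map_sub, FreeAlgebra.lift_ι_apply, AlgHom.commutes, gens,
      Matrix.cons_val_zero, Matrix.cons_val_one, Matrix.head_cons]
    exact relXH K m
  | yh =>
    simp only [map_mul, map_add, FreeAlgebra.lift_ι_apply, AlgHom.commutes, gens,
      Matrix.cons_val_zero, Matrix.cons_val_one, Matrix.head_cons]
    exact relYH K m
  | yx =>
    rw [map_mul, ← Polynomial.aeval_algHom_apply]
    simp only [FreeAlgebra.lift_ι_apply, gens, Matrix.cons_val_zero,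
      Matrix.cons_val_one, Matrix.head_cons]
    exact relYX K m
  | xy =>
    rw [map_mul, ← Polynomial.aeval_algHom_apply]
    simp only [FreeAlgebra.lift_ι_apply, gens, Matrix.cons_val_zero,
      Matrix.cons_val_one, Matrix.head_cons]
    exact relXY K m

def ρ : GWA2 K m →ₐ[K] Module.End K (ℤ → Polynomial K) :=
  RingQuot.liftAlgHom K ⟨FreeAlgebra.lift K (gens K m), rel_sound K m⟩


def hh : GWA2 K m := RingQuot.mkAlgHom K (gwaRel2 K m) (FreeAlgebra.ι K 0)
def xx : GWA2 K m := RingQuot.mkAlgHom K (gwaRel2 K m) (FreeAlgebra.ι K 1)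
def yy : GWA2 K m := RingQuot.mkAlgHom K (gwaRel2 K m) (FreeAlgebra.ι K 2)

lemma ρ_hh : ρ K m (hh K m) = Hop K m := by
  rw [hh, ρ, RingQuot.liftAlgHom_mkAlgHom_apply, FreeAlgebra.lift_ι_apply]
  rfl

lemma ρ_xx : ρ K m (xx K m) = Xop K m := by
  rw [xx, ρ, RingQuot.liftAlgHom_mkAlgHom_apply, FreeAlgebra.lift_ι_apply]
  rfl

lemma ρ_yy : ρ K m (yy K m) = Yop K m := by
  rw [yy, ρ, RingQuot.liftAlgHom_mkAlgHom_apply, FreeAlgebra.lift_ι_apply]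
  rfl

lemma gXH : xx K m * hh K m = (hh K m - algebraMap K _ ((m : K))) * xx K m := by
  have := RingQuot.mkAlgHom_rel K (gwaRel2.xh (K := K) (m := m))
  simpa only [map_mul, map_sub, AlgHom.commutes, hh, xx] using this

lemma gYH : yy K m * hh K m = (hh K m + algebraMap K _ ((m : K))) * yy K m := by
  have := RingQuot.mkAlgHom_rel K (gwaRel2.yh (K := K) (m := m))
  simpa only [map_mul, map_add, AlgHom.commutes, hh, yy] using this

lemma gYX : yy K m * xx K m = aeval (hh K m) (aPoly K m) := by
  have := RingQuot.mkAlgHom_rel K (gwaRel2.yx (K := K) (m := m))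
  rw [map_mul, ← Polynomial.aeval_algHom_apply] at this
  exact this

lemma gXY : xx K m * yy K m = aeval (hh K m) ((aPoly K m).comp (X - C (m : K))) := by
  have := RingQuot.mkAlgHom_rel K (gwaRel2.xy (K := K) (m := m))
  rw [map_mul, ← Polynomial.aeval_algHom_apply] at this
  exact this

lemma gXhk (k : ℕ) :
    xx K m * hh K m ^ k = (hh K m - algebraMap K _ ((m : K))) ^ k * xx K m := by
  induction k with
  | zero => simp
  | succ k ih =>
    rw [pow_succ', ← mul_assoc, gXH, mul_assoc, ih, ← mul_assoc, ← pow_succ']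

lemma gYhk (k : ℕ) :
    yy K m * hh K m ^ k = (hh K m + algebraMap K _ ((m : K))) ^ k * yy K m := by
  induction k with
  | zero => simp
  | succ k ih =>
    rw [pow_succ', ← mul_assoc, gYH, mul_assoc, ih, ← mul_assoc, ← pow_succ']

lemma gXp (p : Polynomial K) :
    xx K m * aeval (hh K m) p = aeval (hh K m) (p.comp (X - C (m : K))) * xx K m := by
  induction p using Polynomial.induction_on' with
  | add p q hp hq => rw [map_add, mul_add, hp, hq, add_comp, map_add, add_mul]
  | monomial k c =>
    simp only [← C_mul_X_pow_eq_monomial, mul_comp, C_comp, X_pow_comp, map_mul, map_pow,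
      aeval_C, aeval_X, map_sub]
    rw [← mul_assoc, ← Algebra.commutes, mul_assoc, gXhk, ← mul_assoc]

lemma gYp (p : Polynomial K) :
    yy K m * aeval (hh K m) p = aeval (hh K m) (p.comp (X + C (m : K))) * yy K m := by
  induction p using Polynomial.induction_on' with
  | add p q hp hq => rw [map_add, mul_add, hp, hq, add_comp, map_add, add_mul]
  | monomial k c =>
    simp only [← C_mul_X_pow_eq_monomial, mul_comp, C_comp, X_pow_comp, map_mul, map_pow,
      aeval_C, aeval_X, map_add]
    rw [← mul_assoc, ← Algebra.commutes, mul_assoc, gYhk, ← mul_assoc]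

/-- the normal form monomial of degree `n` -/
def w (n : ℤ) : GWA2 K m := if 0 ≤ n then xx K m ^ n.toNat else yy K m ^ (-n).toNat

lemma w_nonneg {n : ℤ} (hn : 0 ≤ n) : w K m n = xx K m ^ n.toNat := if_pos hn

lemma w_nonpos {n : ℤ} (hn : n ≤ 0) : w K m n = yy K m ^ (-n).toNat := by
  rcases lt_or_eq_of_le hn with h | h
  · exact if_neg (by omega)
  · subst h; simp [w]

def B (n : ℤ) : Polynomial K →ₗ[K] GWA2 K m :=
  (LinearMap.mulRight K (w K m n)).comp (aeval (hh K m)).toLinearMap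

def Ψ : (ℤ →₀ Polynomial K) →ₗ[K] GWA2 K m := Finsupp.lsum K (B K m)

lemma Ψ_single (n : ℤ) (p : Polynomial K) :
    Ψ K m (Finsupp.single n p) = aeval (hh K m) p * w K m n := by
  rw [Ψ, Finsupp.lsum_single]
  rfl


lemma hh_mul_single (n : ℤ) (p : Polynomial K) :
    hh K m * (aeval (hh K m) p * w K m n) ∈ LinearMap.range (Ψ K m) := by
  refine ⟨Finsupp.single n (X * p), ?_⟩
  rw [Ψ_single, map_mul, aeval_X, ← mul_assoc]

lemma xx_mul_single (n : ℤ) (p : Polynomial K) :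
    xx K m * (aeval (hh K m) p * w K m n) ∈ LinearMap.range (Ψ K m) := by
  rcases le_or_gt 0 n with hn | hn
  · refine ⟨Finsupp.single (n + 1) (p.comp (X - C (m : K))), ?_⟩
    rw [Ψ_single, w_nonneg K m hn, w_nonneg K m (by omega),
      show (n + 1).toNat = n.toNat + 1 by omega, ← mul_assoc, gXp, mul_assoc, ← pow_succ']
  · refine ⟨Finsupp.single (n + 1)
      (p.comp (X - C (m : K)) * ((aPoly K m).comp (X - C (m : K)))), ?_⟩
    rw [Ψ_single, w_nonpos K m (by omega : n ≤ 0), w_nonpos K m (by omega : n + 1 ≤ 0),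
      show (-n).toNat = (-(n+1)).toNat + 1 by omega]
    calc aeval (hh K m) (p.comp (X - C (m : K)) * ((aPoly K m).comp (X - C (m : K)))) *
            yy K m ^ (-(n+1)).toNat
        = aeval (hh K m) (p.comp (X - C (m : K))) *
            ((xx K m * yy K m) * yy K m ^ (-(n+1)).toNat) := by rw [gXY, map_mul, mul_assoc]
      _ = (aeval (hh K m) (p.comp (X - C (m : K))) * xx K m) *
            (yy K m * yy K m ^ (-(n+1)).toNat) := by rw [mul_assoc, mul_assoc]
      _ = xx K m * (aeval (hh K m) p * yy K m ^ ((-(n+1)).toNat + 1)) := by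
            rw [← gXp, pow_succ', mul_assoc]

lemma yy_mul_single (n : ℤ) (p : Polynomial K) :
    yy K m * (aeval (hh K m) p * w K m n) ∈ LinearMap.range (Ψ K m) := by
  rcases le_or_gt n 0 with hn | hn
  · refine ⟨Finsupp.single (n - 1) (p.comp (X + C (m : K))), ?_⟩
    rw [Ψ_single, w_nonpos K m hn, w_nonpos K m (by omega : n - 1 ≤ 0),
      show (-(n - 1)).toNat = (-n).toNat + 1 by omega, ← mul_assoc, gYp, mul_assoc,
      ← pow_succ']
  · refine ⟨Finsupp.single (n - 1) (p.comp (X + C (m : K)) * aPoly K m), ?_⟩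
    rw [Ψ_single, w_nonneg K m (by omega : 0 ≤ n), w_nonneg K m (by omega : 0 ≤ n - 1),
      show n.toNat = (n - 1).toNat + 1 by omega]
    calc aeval (hh K m) (p.comp (X + C (m : K)) * aPoly K m) * xx K m ^ (n-1).toNat
        = aeval (hh K m) (p.comp (X + C (m : K))) *
            ((yy K m * xx K m) * xx K m ^ (n-1).toNat) := by rw [gYX, map_mul, mul_assoc]
      _ = (aeval (hh K m) (p.comp (X + C (m : K))) * yy K m) *
            (xx K m * xx K m ^ (n-1).toNat) := by rw [mul_assoc, mul_assoc]
      _ = yy K m * (aeval (hh K m) p * xx K m ^ ((n-1).toNat + 1)) := by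
            rw [← gYp, pow_succ', mul_assoc]

lemma left_mul_mem (z : GWA2 K m)
    (hz : ∀ (n : ℤ) (p : Polynomial K), z * (aeval (hh K m) p * w K m n) ∈ LinearMap.range (Ψ K m)) :
    ∀ s ∈ LinearMap.range (Ψ K m), z * s ∈ LinearMap.range (Ψ K m) := by
  rintro s ⟨g, rfl⟩
  induction g using Finsupp.induction with
  | zero => rw [map_zero, mul_zero]; exact Submodule.zero_mem _
  | single_add n p g _ _ ih =>
    rw [map_add, mul_add]
    exact Submodule.add_mem _ (by rw [Ψ_single]; exact hz n p) ih

lemma mul_mem_range (z : GWA2 K m) :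
    ∀ s ∈ LinearMap.range (Ψ K m), z * s ∈ LinearMap.range (Ψ K m) := by
  obtain ⟨f, rfl⟩ := RingQuot.mkAlgHom_surjective K (gwaRel2 K m) z
  induction f using FreeAlgebra.induction with
  | grade0 c =>
    intro s hs
    have hc : RingQuot.mkAlgHom K (gwaRel2 K m) (algebraMap K _ c) = algebraMap K (GWA2 K m) c :=
      AlgHom.commutes _ c
    rw [hc, ← Algebra.smul_def]
    exact Submodule.smul_mem _ _ hs
  | grade1 i =>
    fin_cases i
    · exact left_mul_mem K m _ (hh_mul_single K m)
    · exact left_mul_mem K m _ (xx_mul_single K m)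
    · exact left_mul_mem K m _ (yy_mul_single K m)
  | mul a b ha hb =>
    intro s hs
    rw [map_mul, mul_assoc]
    exact ha _ (hb _ hs)
  | add a b ha hb =>
    intro s hs
    rw [map_add, add_mul]
    exact Submodule.add_mem _ (ha s hs) (hb s hs)

lemma Ψ_surj (z : GWA2 K m) : ∃ g, Ψ K m g = z := by
  have h1 : (1 : GWA2 K m) ∈ LinearMap.range (Ψ K m) := by
    refine ⟨Finsupp.single 0 1, ?_⟩
    rw [Ψ_single, map_one, one_mul, w_nonneg K m le_rfl, Int.toNat_zero, pow_zero]
  have := mul_mem_range K m z 1 h1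
  rw [mul_one] at this
  exact this


def e₀ : ℤ → Polynomial K := fun n => if n = 0 then 1 else 0

def ev (z : GWA2 K m) : ℤ → Polynomial K := ρ K m z (e₀ K)

lemma ev_zero : ev K m 0 = 0 := by simp [ev]

lemma ev_add (z z' : GWA2 K m) : ev K m (z + z') = ev K m z + ev K m z' := by
  simp [ev, map_add]

lemma ρ_aeval (p : Polynomial K) : ρ K m (aeval (hh K m) p) = aeval (Hop K m) p := by
  rw [← Polynomial.aeval_algHom_apply, ρ_hh]

def PiProd (j : ℕ) : Polynomial K :=
  ∏ r ∈ Finset.range j, (aPoly K m).comp (th K m (-(r + 1 : ℕ)))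

def Pi0 (n : ℤ) : Polynomial K := if 0 ≤ n then 1 else PiProd K m (-n).toNat

lemma ev_xx_pow (k : ℕ) :
    ev K m (xx K m ^ k) = fun n => if n = (k : ℤ) then 1 else 0 := by
  induction k with
  | zero => funext n; simp [ev, e₀]
  | succ k ih =>
    funext n
    have h1 : ev K m (xx K m ^ (k + 1)) = Xop K m (ev K m (xx K m ^ k)) := by
      rw [ev, ev, pow_succ', map_mul, Module.End.mul_apply, ρ_xx]
    simp only [h1, Xop_apply, ih]
    by_cases hn : n = ((k : ℤ) + 1)
    · rw [if_pos (by omega), if_pos (by push_cast; omega)]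
    · rw [if_neg (by omega), if_neg (by push_cast; omega)]

lemma ev_yy_pow (j : ℕ) :
    ev K m (yy K m ^ j) = fun n => if n = -(j : ℤ) then PiProd K m j else 0 := by
  induction j with
  | zero => funext n; simp [ev, e₀, PiProd]
  | succ j ih =>
    funext n
    have h1 : ev K m (yy K m ^ (j + 1)) = Yop K m (ev K m (yy K m ^ j)) := by
      rw [ev, ev, pow_succ', map_mul, Module.End.mul_apply, ρ_yy]
    simp only [h1, Yop_apply, ih]
    by_cases hn : n = -((j : ℤ) + 1)
    · rw [if_pos (by omega), if_pos (by push_cast; omega)]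
      conv_rhs => rw [PiProd, Finset.prod_range_succ]
      rw [← PiProd]
      rw [show th K m (-(j + 1 : ℕ)) = th K m n from by rw [hn]; norm_num]
      ring
    · rw [if_neg (by omega), if_neg (by push_cast; omega), mul_zero]

lemma ev_w (n : ℤ) :
    ev K m (w K m n) = fun k => if k = n then Pi0 K m n else 0 := by
  rcases le_or_gt 0 n with hn | hn
  · rw [w_nonneg K m hn, ev_xx_pow, Pi0, if_pos hn]
    funext k
    rw [Int.toNat_of_nonneg hn]
  · rw [w_nonpos K m (le_of_lt hn), ev_yy_pow, Pi0, if_neg (by omega)]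
    funext k
    rw [show -((-n).toNat : ℤ) = n by omega]

lemma ev_single (n : ℤ) (p : Polynomial K) (k : ℤ) :
    ev K m (Ψ K m (Finsupp.single n p)) k
      = if k = n then p.comp (th K m n) * Pi0 K m n else 0 := by
  rw [Ψ_single, ev, map_mul, Module.End.mul_apply, ρ_aeval, aeval_Hop_apply]
  have : ρ K m (w K m n) (e₀ K) k = if k = n then Pi0 K m n else 0 := by
    rw [← ev, ev_w]
  rw [this]
  by_cases hk : k = n
  · rw [if_pos hk, if_pos hk, hk]
  · rw [if_neg hk, if_neg hk, mul_zero]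

lemma ev_psi (g : ℤ →₀ Polynomial K) (k : ℤ) :
    ev K m (Ψ K m g) k = (g k).comp (th K m k) * Pi0 K m k := by
  induction g using Finsupp.induction with
  | zero => rw [map_zero, ev_zero]; simp
  | single_add n p g hg hp ih =>
    rw [map_add, ev_add, Pi.add_apply, ev_single, ih, Finsupp.add_apply,
      Finsupp.single_apply, add_comp, add_mul]
    by_cases hk : k = n
    · rw [if_pos hk, if_pos (hk.symm), hk]
    · rw [if_neg hk, if_neg (fun h => hk h.symm), zero_comp, zero_mul, zero_add]


lemma aPoly_ne_zero : aPoly K m ≠ 0 := by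
  apply mul_ne_zero (X_add_C_ne_zero _)
  exact Finset.prod_ne_zero_iff.mpr fun j _ => X_sub_C_ne_zero _

lemma comp_th_eq_zero {q : Polynomial K} {n : ℤ} (h : q.comp (th K m n) = 0) : q = 0 := by
  have h2 := congrArg (fun r : Polynomial K => r.comp (X - C ((n : K) * (m : K)))) h
  simp only [th, zero_comp] at h2
  rwa [comp_assoc, add_comp, X_comp, C_comp, sub_add_cancel, comp_X] at h2

lemma Pi0_ne_zero (n : ℤ) : Pi0 K m n ≠ 0 := by
  rw [Pi0]
  split
  · exact one_ne_zero
  · exact Finset.prod_ne_zero_iff.mpr fun r _ hz =>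
      aPoly_ne_zero K m (comp_th_eq_zero K m hz)

lemma xxpow_h (k : ℕ) :
    xx K m ^ k * hh K m = (hh K m - algebraMap K _ ((k : K) * m)) * xx K m ^ k := by
  induction k with
  | zero => simp
  | succ k ih =>
    have hc : ((k + 1 : ℕ) : K) * m = (k : K) * m + m := by push_cast; ring
    calc xx K m ^ (k + 1) * hh K m
        = xx K m ^ k * (xx K m * hh K m) := by rw [pow_succ, mul_assoc]
      _ = xx K m ^ k * ((hh K m - algebraMap K _ ((m : K))) * xx K m) := by rw [gXH]
      _ = (xx K m ^ k * hh K m - xx K m ^ k * algebraMap K _ ((m : K))) * xx K m := by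
            rw [← mul_assoc, mul_sub]
      _ = ((hh K m - algebraMap K _ ((k : K) * m)) * xx K m ^ k
            - algebraMap K _ ((m : K)) * xx K m ^ k) * xx K m := by
            rw [ih, ← Algebra.commutes]
      _ = (hh K m - algebraMap K _ (((k + 1 : ℕ) : K) * m)) * xx K m ^ (k + 1) := by
            rw [hc, map_add, pow_succ, ← sub_sub]
            simp only [sub_mul, mul_assoc]

lemma yypow_h (k : ℕ) :
    yy K m ^ k * hh K m = (hh K m + algebraMap K _ ((k : K) * m)) * yy K m ^ k := by
  induction k with
  | zero => simp
  | succ k ih =>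
    have hc : ((k + 1 : ℕ) : K) * m = (k : K) * m + m := by push_cast; ring
    calc yy K m ^ (k + 1) * hh K m
        = yy K m ^ k * (yy K m * hh K m) := by rw [pow_succ, mul_assoc]
      _ = yy K m ^ k * ((hh K m + algebraMap K _ ((m : K))) * yy K m) := by rw [gYH]
      _ = (yy K m ^ k * hh K m + yy K m ^ k * algebraMap K _ ((m : K))) * yy K m := by
            rw [← mul_assoc, mul_add]
      _ = ((hh K m + algebraMap K _ ((k : K) * m)) * yy K m ^ k
            + algebraMap K _ ((m : K)) * yy K m ^ k) * yy K m := by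
            rw [ih, ← Algebra.commutes]
      _ = (hh K m + algebraMap K _ (((k + 1 : ℕ) : K) * m)) * yy K m ^ (k + 1) := by
            rw [hc, map_add, pow_succ, ← add_assoc]
            simp only [add_mul, mul_assoc]

lemma w_mul_h (n : ℤ) :
    w K m n * hh K m = (hh K m - algebraMap K _ ((n : K) * m)) * w K m n := by
  rcases le_or_gt 0 n with hn | hn
  · have hc : ((n.toNat : ℕ) : K) = (n : K) := by
      have h3 : (n.toNat : ℤ) = n := Int.toNat_of_nonneg hn
      calc ((n.toNat : ℕ) : K) = (((n.toNat : ℤ) : K)) := by push_cast; rfl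
        _ = (n : K) := by rw [h3]
    rw [w_nonneg K m hn, xxpow_h, hc]
  · have hc : (((-n).toNat : ℕ) : K) = -(n : K) := by
      have h3 : ((-n).toNat : ℤ) = -n := Int.toNat_of_nonneg (by omega)
      calc (((-n).toNat : ℕ) : K) = ((((-n).toNat : ℤ) : K)) := by push_cast; rfl
        _ = ((-n : ℤ) : K) := by rw [h3]
        _ = -(n : K) := by push_cast; rfl
    rw [w_nonpos K m (le_of_lt hn), yypow_h, hc,
      show (-(n : K)) * m = -((n : K) * m) from by ring, map_neg, ← sub_eq_add_neg]

lemma single_mul_h (n : ℤ) (p : Polynomial K) :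
    Ψ K m (Finsupp.single n p) * hh K m
      = Ψ K m (Finsupp.single n (p * (X - C ((n : K) * m)))) := by
  rw [Ψ_single, Ψ_single, map_mul, map_sub, aeval_X, aeval_C, mul_assoc, w_mul_h, ← mul_assoc]

lemma psi_mul_h (g : ℤ →₀ Polynomial K) (k : ℤ) :
    ev K m (Ψ K m g * hh K m) k = X * ev K m (Ψ K m g) k := by
  induction g using Finsupp.induction with
  | zero => rw [map_zero, zero_mul, ev_zero]; simp
  | single_add n p g hg hp ih =>
    rw [map_add, add_mul, ev_add, Pi.add_apply, ih, single_mul_h, ev_single, ev_add,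
      Pi.add_apply, ev_single, mul_add]
    congr 1
    by_cases hk : k = n
    · rw [if_pos hk, if_pos hk, mul_comp, sub_comp, X_comp, C_comp,
        show th K m n - C ((n : K) * m) = X from by rw [th]; ring]
      ring
    · rw [if_neg hk, if_neg hk, mul_zero]


lemma ev_h_mul (z : GWA2 K m) (k : ℤ) :
    ev K m (hh K m * z) k = th K m k * ev K m z k := by
  rw [ev, map_mul, Module.End.mul_apply, ρ_hh, Hop_apply, ← ev]

lemma const_of_comp [CharZero K] (hm0 : (m : K) ≠ 0) (p : Polynomial K)
    (h : p.comp (X - C (m : K)) = p) : ∃ c : K, p = C c := by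
  have heval : ∀ t : K, p.eval (t - m) = p.eval t := by
    intro t
    conv_rhs => rw [← h]
    rw [eval_comp]
    simp
  have hev : ∀ k : ℕ, p.eval (-(k : K) * m) = p.eval 0 := by
    intro k
    induction k with
    | zero => simp
    | succ k ih =>
      rw [show (-((k + 1 : ℕ) : K) * m) = -(k : K) * m - m from by push_cast; ring,
        heval, ih]
  have hqz : p - C (p.eval 0) = 0 := by
    by_contra hne
    have hfin := Polynomial.finite_setOf_isRoot hne
    refine Set.infinite_of_injective_forall_mem
      (f := fun k : ℕ => -(k : K) * m) ?_ ?_ hfin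
    · intro a b hab
      simp only at hab
      have : -(a : K) = -(b : K) := mul_right_cancel₀ hm0 hab
      exact_mod_cast neg_injective this
    · intro k
      simp only [Set.mem_setOf_eq, IsRoot, eval_sub, eval_C, hev k, sub_self]
  exact ⟨p.eval 0, by rwa [sub_eq_zero] at hqz⟩

end GwaAux


open GwaAux

/-- the center of the generalized Weyl algebra
`𝒜 = K[h][X,Y;σ^m, (h+m-1)(h-2)⋯(h-m)]` equals `K`. -/
theorem stmt10 (K : Type*) [Field K] [CharZero K] (m : ℕ) (hm : 2 ≤ m) :
    Subalgebra.center K (GWA2 K m) = ⊥ := by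
  refine le_antisymm ?_ bot_le
  intro z hz
  rw [Subalgebra.mem_center_iff] at hz
  obtain ⟨g, hg⟩ := Ψ_surj K m z
  have hm0 : (m : K) ≠ 0 := Nat.cast_ne_zero.mpr (by omega)
  have hstep1 : ∀ k : ℤ, k ≠ 0 → g k = 0 := by
    intro k hk
    have hcom : hh K m * z = z * hh K m := hz (hh K m)
    have e1 : ev K m (hh K m * z) k = th K m k * ev K m z k := ev_h_mul K m z k
    have e2 : ev K m (z * hh K m) k = X * ev K m z k := by
      rw [← hg]
      exact psi_mul_h K m g k
    have e3 : th K m k * ev K m z k = X * ev K m z k := by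
      rw [← e1, ← e2, hcom]
    have e4 : C ((k : K) * m) * ev K m z k = 0 := by
      rw [th] at e3
      linear_combination e3
    have hv : ev K m z k = 0 := by
      rcases mul_eq_zero.mp e4 with h | h
      · exact absurd (C_eq_zero.mp h)
          (mul_ne_zero (Int.cast_ne_zero.mpr hk) hm0)
      · exact h
    have e5 := ev_psi K m g k
    rw [hg, hv] at e5
    rcases mul_eq_zero.mp e5.symm with h | h
    · exact comp_th_eq_zero K m h
    · exact absurd h (Pi0_ne_zero K m k)
  have hgs : g = Finsupp.single 0 (g 0) := by
    ext k
    rcases eq_or_ne k 0 with rfl | hk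
    · simp
    · rw [hstep1 k hk, Finsupp.single_apply, if_neg (fun h => hk h.symm)]
  have hzp : z = aeval (hh K m) (g 0) := by
    rw [← hg, hgs, Ψ_single, w_nonneg K m le_rfl, Int.toNat_zero, pow_zero, mul_one,
      Finsupp.single_eq_same]
  have hxz : xx K m * z = z * xx K m := hz (xx K m)
  rw [hzp, gXp] at hxz
  have hdiff : Ψ K m (Finsupp.single 1 ((g 0).comp (X - C (m : K)) - g 0)) = 0 := by
    rw [Ψ_single, map_sub, sub_mul, w_nonneg K m (by norm_num), Int.toNat_one, pow_one,
      hxz, sub_self]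
  have hq0 : (g 0).comp (X - C (m : K)) - g 0 = 0 := by
    have h0 := ev_psi K m (Finsupp.single 1 ((g 0).comp (X - C (m : K)) - g 0)) 1
    rw [hdiff, ev_zero, Finsupp.single_eq_same] at h0
    rcases mul_eq_zero.mp h0.symm with h | h
    · exact comp_th_eq_zero K m h
    · exact absurd h (Pi0_ne_zero K m 1)
  obtain ⟨c, hc⟩ := const_of_comp K m hm0 (g 0) (sub_eq_zero.mp hq0)
  rw [Algebra.mem_bot]
  exact ⟨c, by rw [hzp, hc, aeval_C]⟩
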